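/- In the affine Weyl group of type Ã₂, for integers j and non-negative integers m,n, the inverse of ρʲ(θ(m,n)) equals ρ^{j+n−m}(θ(n,m)), where ρ is the automorphism induced by the rotation s₀↦s₁↦s₂↦s₀. -/

import Mathlib

open CoxeterSystem LaurentPolynomial

noncomputable section

/-- The Coxeter matrix of affine type Ã₂: all off-diagonal entries equal `3`. -/
def A2TildeMatrix : CoxeterMatrix (ZMod 3) :=
  { M := Matrix.of fun i j => if i = j then 1 else 3
    isSymm := by decide
    diagonal := by decide
    off_diagonal := by
      intro i i' h
      simp [Matrix.of_apply, h] }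

/-- The affine Weyl group of type Ã₂. -/
abbrev A2Tilde : Type _ := A2TildeMatrix.Group

/-- The canonical Coxeter system of type Ã₂; the simple reflections are
`s₀ = csA.simple 0`, `s₁ = csA.simple 1`, `s₂ = csA.simple 2`. -/
def csA : CoxeterSystem A2TildeMatrix A2Tilde := A2TildeMatrix.toCoxeterSystem

/-- The word with labels `1, 2, …, 2m+1, 2m+2, 2m+1, …, 2m−2n+1`, read mod 3
(the label `k` stands for the simple reflection `s_{k mod 3}`). -/
def thetaWord (m n : ℕ) : List (ZMod 3) :=
  ((List.range (2 * m + 2)).map fun i => ((i + 1 : ℕ) : ZMod 3)) ++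
    ((List.range (2 * n + 1)).map fun j => (((2 * m + 1 : ℤ) - (j : ℤ)) : ZMod 3))

/-- The element `θ(m,n)` of the affine Weyl group of type Ã₂. -/
def theta (m n : ℕ) : A2Tilde := csA.wordProd (thetaWord m n)

lemma rev_map_range (L : ℕ) (f : ℕ → ZMod 3) :
    (List.map f (List.range L)).reverse = List.map (fun x => f (L - 1 - x)) (List.range L) := by
  rw [← List.map_reverse, List.range_eq_range', List.reverse_range', List.map_map,
    List.range_eq_range']
  apply List.map_congr_left
  intro a _
  simp

lemma thetaWord_reverse (m n : ℕ) :
    (thetaWord m n).reverse = (thetaWord n m).map (· + ((n : ZMod 3) - (m : ZMod 3))) := by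
  have h3 : (3 : ZMod 3) = 0 := rfl
  unfold thetaWord
  have hco : ∀ L : ℕ, (do let a ← List.range L; pure ((a : ℤ))) =
      (List.range L).map (fun a : ℕ => (a : ℤ)) := by
    intro L
    simp only [bind_pure_comp]
    induction List.range L with
    | nil => rfl
    | cons a l ih => simp_all [List.flatMap_cons]
  rw [hco, hco, List.map_map, List.map_map]
  rw [List.reverse_append, rev_map_range, rev_map_range, List.map_append, List.map_map,
    List.map_map]
  conv_rhs => rw [show 2 * n + 2 = (2 * n + 1) + 1 from rfl, List.range_succ]
  rw [List.map_append, List.append_assoc]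
  simp only [List.map_cons, List.map_nil, List.singleton_append]
  conv_lhs => rw [show 2 * m + 2 = (2 * m + 1) + 1 from rfl]
  conv_lhs => rhs; rw [List.range_succ_eq_map]
  rw [List.map_cons, List.map_map]
  congr 1
  · apply List.map_congr_left
    intro a ha
    rw [List.mem_range] at ha
    simp only [Function.comp_apply]
    rw [show 2 * n + 1 - 1 - a = 2 * n - a from by omega, Nat.cast_sub (by omega : a ≤ 2 * n)]
    push_cast
    linear_combination ((m : ZMod 3) - (n : ZMod 3)) * h3
  · congr 1
    · simp only [Function.comp_apply]
      rw [show 2 * m + 2 - 1 - 0 = 2 * m + 1 from by omega]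
      push_cast
      linear_combination ((m : ZMod 3) - (n : ZMod 3)) * h3
    · apply List.map_congr_left
      intro a ha
      rw [List.mem_range] at ha
      simp only [Function.comp_apply, Nat.succ_eq_add_one]
      rw [show 2 * m + 2 - 1 - (a + 1) = 2 * m - a from by omega]
      rw [show (2 * m - a : ℕ) + 1 = 2 * m + 1 - a from by omega,
        Nat.cast_sub (by omega : a ≤ 2 * m + 1)]
      push_cast
      linear_combination ((m : ZMod 3) - (n : ZMod 3)) * h3

lemma rho_zpow_simple (ρ : MulAut A2Tilde)
    (hρ : ∀ i : ZMod 3, ρ (csA.simple i) = csA.simple (i + 1)) :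
    ∀ j : ℤ, ∀ i : ZMod 3, (ρ ^ j) (csA.simple i) = csA.simple (i + (j : ZMod 3)) := by
  intro j
  induction j using Int.induction_on with
  | zero => intro i; simp
  | succ k ih =>
      intro i
      have h : ρ ^ ((k : ℤ) + 1) = ρ * ρ ^ (k : ℤ) := by
        rw [← zpow_one_add]; ring_nf
      rw [h, MulAut.mul_apply, ih, hρ]
      push_cast
      ring_nf
  | pred k ih =>
      intro i
      apply ρ.injective
      have h : ρ ((ρ ^ (-(k : ℤ) - 1)) (csA.simple i)) = (ρ ^ (-(k : ℤ))) (csA.simple i) := by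
        rw [← MulAut.mul_apply, ← zpow_one_add]
        ring_nf
      rw [h, ih, hρ]
      push_cast
      ring_nf

lemma rho_zpow_wordProd (ρ : MulAut A2Tilde)
    (hρ : ∀ i : ZMod 3, ρ (csA.simple i) = csA.simple (i + 1)) (j : ℤ) (l : List (ZMod 3)) :
    (ρ ^ j) (csA.wordProd l) = csA.wordProd (l.map (· + (j : ZMod 3))) := by
  induction l with
  | nil => simp
  | cons a l ih =>
      rw [wordProd_cons, map_mul, ih, rho_zpow_simple ρ hρ, List.map_cons, wordProd_cons]

/-- For the rotation automorphism `ρ` (`s₀↦s₁↦s₂↦s₀`), one has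
`(ρʲ(θ(m,n)))⁻¹ = ρ^{j+n−m}(θ(n,m))` for every integer `j`. -/
theorem inv_rho_pow_theta (m n : ℕ) (ρ : MulAut A2Tilde)
    (hρ : ∀ i : ZMod 3, ρ (csA.simple i) = csA.simple (i + 1)) (j : ℤ) :
    ((ρ ^ j) (theta m n))⁻¹ = (ρ ^ (j + (n : ℤ) - (m : ℤ))) (theta n m) := by
  rw [← map_inv, theta, theta, ← wordProd_reverse, thetaWord_reverse,
    rho_zpow_wordProd ρ hρ, rho_zpow_wordProd ρ hρ, List.map_map]
  congr 1
  apply List.map_congr_left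
  intro a _
  simp only [Function.comp_apply]
  push_cast
  ring

end
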